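/- Let κ be a regular cardinal and let (G_α)_{α < κ} be a sequence of graphs such that for all α ≤ α' < κ there is a homomorphism from G_{α'} to G_α. If there exist a set I₀ ⊆ κ of cardinality less than κ and a graph homomorphism from ∏_{α ∈ I₀} G_α to ∏_{α < κ} G_α, then there is some β < κ and a graph homomorphism from G_β to G_{β+1}. -/

import Mathlib

open Ordinal Cardinal

/-- A graph homomorphism is an edge-preserving map. -/
def IsGraphHom {G G' : Type*} (E : G → G → Prop) (E' : G' → G' → Prop)
    (h : G → G') : Prop :=
  ∀ v w, E v w → E' (h v) (h w)

/-- Let `κ` be regular and `(G_α)_{α<κ}` a sequence of graphs with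
homomorphisms `G_{α'} → G_α` for `α ≤ α' < κ`.  If some subproduct over an
index set `I₀ ⊆ κ` of size `< κ` admits a homomorphism into the full product
`∏_{α<κ} G_α`, then there are `β < κ` and a homomorphism `G_β → G_{β+1}`. -/
theorem exists_succ_hom_of_subproduct_hom
    (κ : Cardinal.{0}) (hreg : κ.IsRegular)
    (G : Ordinal → Type) (E : ∀ α, G α → G α → Prop)
    (hback : ∀ α α' : Ordinal, α ≤ α' → α' < κ.ord →
      ∃ h : G α' → G α, IsGraphHom (E α') (E α) h)
    (I₀ : Set Ordinal) (hI₀ : I₀ ⊆ Set.Iio κ.ord) (hcard : #I₀ < Cardinal.lift.{1} κ)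
    (hsub : ∃ h : (∀ α : I₀, G α) → (∀ α : {α : Ordinal // α < κ.ord}, G α),
      IsGraphHom
        (fun f g => ∀ α : I₀, E α (f α) (g α))
        (fun f g => ∀ α : {α : Ordinal // α < κ.ord}, E α (f α) (g α)) h) :
    ∃ β : Ordinal, β < κ.ord ∧
      ∃ h : G β → G (β + 1), IsGraphHom (E β) (E (β + 1)) h := by
  obtain ⟨h, hh⟩ := hsub
  set e := Ordinal.ToType.mk (o := κ.ord) with he
  set ι := {x : κ.ord.ToType // (e.symm x : Ordinal) ∈ I₀} with hι
  have eq1 : ι ≃ I₀ :=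
    { toFun := fun x => ⟨e.symm x.1, x.2⟩
      invFun := fun a => ⟨e ⟨a.1, hI₀ a.2⟩, by simp⟩
      left_inv := fun x => by simp
      right_inv := fun a => by simp }
  have hmk : Cardinal.lift.{1} #ι = Cardinal.lift.{0} #I₀ :=
    Cardinal.lift_mk_eq'.2 ⟨eq1⟩
  have hιlt : #ι < κ := by
    rw [Cardinal.lift_id'] at hmk
    rw [← Cardinal.lift_lt.{0,1}, hmk]
    exact hcard
  set f : ι → Ordinal := fun x => (e.symm x.1 : Ordinal) with hf
  have hsup : iSup f < κ.ord :=
    Ordinal.iSup_lt_ord (by rwa [hreg.cof_eq]) (fun i => (e.symm i.1).2)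
  set β := iSup f with hβdef
  have hβ1 : β + 1 < κ.ord := by
    rw [Ordinal.add_one_eq_succ]
    exact (Cardinal.isSuccLimit_ord hreg.aleph0_le).succ_lt hsup
  have hle : ∀ α : I₀, (α : Ordinal) ≤ β := by
    rintro ⟨α, hα⟩
    have := le_ciSup (Ordinal.bddAbove_range f) (⟨e ⟨α, hI₀ hα⟩, by simp [hα]⟩ : ι)
    simpa [hf] using this
  choose gmap ghom using fun α : I₀ => hback α β (hle α) hsup
  refine ⟨β, hsup, fun x => h (fun α => gmap α x) ⟨β + 1, hβ1⟩, ?_⟩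
  intro v w hvw
  exact hh _ _ (fun α => ghom α v w hvw) ⟨β + 1, hβ1⟩
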